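/- Let (S_n) be the lazy symmetric random walk with P(ξ=±1)=p ∈ (0,1/2), P(ξ=0)=1-2p, S_0=0, and T := inf{n>0 : S_n ≤ 0}. Then for every m ≥ 1 and every integer b ≥ 1, P(S_m = b, T > m) = p [P(S_{m-1} = b-1) - P(S_{m-1} = b+1)]. -/

import Mathlib

open MeasureTheory ProbabilityTheory Finset

set_option maxHeartbeats 1000000

open scoped Classical

noncomputable section ReflAux

namespace ReflAux

def V : Finset ℤ := {-1, 0, 1}

lemma mem_V {v : ℤ} : v ∈ V ↔ v = -1 ∨ v = 0 ∨ v = 1 := by simp [V]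

lemma neg_mem_V {v : ℤ} (h : v ∈ V) : -v ∈ V := by
  rcases mem_V.1 h with h | h | h <;> simp [mem_V, h]

def q (p : ℝ) (v : ℤ) : ℝ := if v = 0 then 1 - 2 * p else p

lemma q_neg (p : ℝ) (v : ℤ) : q p (-v) = q p v := by simp [q, neg_eq_zero]

lemma q_nonneg {p : ℝ} (hp : p ∈ Set.Ioo (0 : ℝ) (1 / 2)) (v : ℤ) : 0 ≤ q p v := by
  unfold q; obtain ⟨h1, h2⟩ := hp; split <;> nlinarith

def extf {n : ℕ} (g : Fin n → ℤ) (i : ℕ) : ℤ := if h : i < n then g ⟨i, h⟩ else 0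

lemma extf_lt {n : ℕ} (g : Fin n → ℤ) {i : ℕ} (h : i < n) : extf g i = g ⟨i, h⟩ :=
  dif_pos h

lemma extf_ge {n : ℕ} (g : Fin n → ℤ) {i : ℕ} (h : n ≤ i) : extf g i = 0 :=
  dif_neg (by omega)

def psum {n : ℕ} (g : Fin n → ℤ) (k : ℕ) : ℤ := ∑ i ∈ Finset.range k, extf g i

lemma psum_zero {n : ℕ} (g : Fin n → ℤ) : psum g 0 = 0 := by simp [psum]

lemma psum_succ {n : ℕ} (g : Fin n → ℤ) (k : ℕ) :
    psum g (k + 1) = psum g k + extf g k := Finset.sum_range_succ _ _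

def W (p : ℝ) {n : ℕ} (g : Fin n → ℤ) : ℝ := ∏ i, q p (g i)

lemma W_nonneg {p : ℝ} (hp : p ∈ Set.Ioo (0 : ℝ) (1 / 2)) {n : ℕ} (g : Fin n → ℤ) :
    0 ≤ W p g := Finset.prod_nonneg fun i _ => q_nonneg hp _

def Pn (n : ℕ) : Finset (Fin n → ℤ) := Fintype.piFinset fun _ => V

lemma mem_Pn {n : ℕ} {g : Fin n → ℤ} : g ∈ Pn n ↔ ∀ i, g i ∈ V := by
  simp [Pn, Fintype.mem_piFinset]

lemma psum_stable {n : ℕ} (g : Fin n → ℤ) {k : ℕ} (h : n ≤ k) :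
    psum g k = psum g n := by
  induction k, h using Nat.le_induction with
  | base => rfl
  | succ k hk ih => rw [psum_succ, extf_ge g (by omega), add_zero, ih]

lemma extf_ge_neg_one {n : ℕ} {g : Fin n → ℤ} (hg : g ∈ Pn n) (i : ℕ) :
    -1 ≤ extf g i := by
  unfold extf; split
  · next hlt => rcases mem_V.1 (mem_Pn.1 hg ⟨i, hlt⟩) with h | h | h <;> omega
  · omega

/-- If a partial sum is `≤ -1` then some partial sum equals `-1`. -/
lemma hit_neg_one {n : ℕ} {g : Fin n → ℤ} (hg : g ∈ Pn n) :
    ∀ k, psum g k ≤ -1 → ∃ j ≤ k, psum g j = -1 := by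
  intro k
  induction k with
  | zero => rw [psum_zero]; omega
  | succ k ih =>
    intro hk
    by_cases h : psum g k ≤ -1
    · obtain ⟨j, hj, hj'⟩ := ih h
      exact ⟨j, by omega, hj'⟩
    · have := extf_ge_neg_one hg k
      rw [psum_succ] at hk
      exact ⟨k + 1, le_refl _, by rw [psum_succ]; omega⟩

/-- First hitting index of `-1` by the partial sums (junk value if none). -/
def tau {n : ℕ} (g : Fin n → ℤ) : ℕ :=
  if h : ∃ k, psum g k = -1 then Nat.find h else 0

lemma psum_tau {n : ℕ} {g : Fin n → ℤ} (h : ∃ k, psum g k = -1) :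
    psum g (tau g) = -1 := by
  rw [tau, dif_pos h]; exact Nat.find_spec h

lemma tau_le {n : ℕ} {g : Fin n → ℤ} {k : ℕ} (hk : psum g k = -1) : tau g ≤ k := by
  have h : ∃ k, psum g k = -1 := ⟨k, hk⟩
  rw [tau, dif_pos h]; exact Nat.find_min' h hk

lemma tau_min {n : ℕ} {g : Fin n → ℤ} (h : ∃ k, psum g k = -1) {k : ℕ}
    (hk : k < tau g) : psum g k ≠ -1 := by
  rw [tau, dif_pos h] at hk
  exact Nat.find_min h hk

lemma tau_le_n {n : ℕ} {g : Fin n → ℤ} (h : ∃ k, psum g k = -1) : tau g ≤ n := by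
  obtain ⟨k, hk⟩ := h
  rcases le_total k n with hkn | hkn
  · exact le_trans (tau_le hk) hkn
  · exact tau_le (by rw [← psum_stable g hkn]; exact hk)

/-- Reflection map: negate all steps from index `tau g` on. -/
def R {n : ℕ} (g : Fin n → ℤ) : Fin n → ℤ :=
  fun i => if (i : ℕ) < tau g then g i else -g i

lemma R_mem {n : ℕ} {g : Fin n → ℤ} (hg : g ∈ Pn n) : R g ∈ Pn n := by
  rw [mem_Pn]; intro i
  unfold R; split
  · exact mem_Pn.1 hg i
  · exact neg_mem_V (mem_Pn.1 hg i)

lemma W_R (p : ℝ) {n : ℕ} (g : Fin n → ℤ) : W p (R g) = W p g := by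
  unfold W; refine Finset.prod_congr rfl fun i _ => ?_
  unfold R; split
  · rfl
  · exact q_neg p _

lemma extf_R {n : ℕ} (g : Fin n → ℤ) (i : ℕ) :
    extf (R g) i = if i < tau g then extf g i else -(extf g i) := by
  unfold extf R
  by_cases h : i < n <;> by_cases h2 : i < tau g <;> simp [h, h2]

lemma psum_R_le {n : ℕ} (g : Fin n → ℤ) {k : ℕ} (hk : k ≤ tau g) :
    psum (R g) k = psum g k := by
  unfold psum
  refine Finset.sum_congr rfl fun i hi => ?_
  rw [extf_R, if_pos (by simp at hi; omega)]

lemma psum_R_ge {n : ℕ} {g : Fin n → ℤ} (h : ∃ k, psum g k = -1) {k : ℕ}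
    (hk : tau g ≤ k) : psum (R g) k = -2 - psum g k := by
  induction k, hk using Nat.le_induction with
  | base =>
    rw [psum_R_le g le_rfl, psum_tau h]; omega
  | succ k hk ih =>
    rw [psum_succ, psum_succ, ih, extf_R, if_neg (by omega)]
    ring

lemma exists_R {n : ℕ} {g : Fin n → ℤ} (h : ∃ k, psum g k = -1) :
    ∃ k, psum (R g) k = -1 :=
  ⟨tau g, by rw [psum_R_le g le_rfl, psum_tau h]⟩

lemma tau_R {n : ℕ} {g : Fin n → ℤ} (h : ∃ k, psum g k = -1) : tau (R g) = tau g := by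
  have h1 : psum (R g) (tau g) = -1 := by rw [psum_R_le g le_rfl, psum_tau h]
  refine le_antisymm (tau_le h1) ?_
  by_contra hlt
  push_neg at hlt
  exact tau_min h hlt (by rw [← psum_R_le g (le_of_lt hlt)]; exact psum_tau (exists_R h))

lemma R_R {n : ℕ} {g : Fin n → ℤ} (h : ∃ k, psum g k = -1) : R (R g) = g := by
  funext i
  have h1 : R (R g) i = if (i : ℕ) < tau g then R g i else -(R g i) := by
    rw [← tau_R h]; rfl
  rw [h1]
  by_cases hi : (i : ℕ) < tau g <;> simp [R, hi]


lemma extf_neg {n : ℕ} (g : Fin n → ℤ) (j : ℕ) :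
    extf (fun i => -g i) j = -(extf g j) := by
  unfold extf; split <;> simp

lemma psum_neg {n : ℕ} (g : Fin n → ℤ) (k : ℕ) :
    psum (fun i => -g i) k = -psum g k := by
  unfold psum
  rw [← Finset.sum_neg_distrib]
  exact Finset.sum_congr rfl fun i _ => extf_neg g i

lemma sum_reflect (p : ℝ) (n : ℕ) {b : ℤ} (hb : 1 ≤ b) :
    ∑ g ∈ (Pn n).filter (fun g => psum g n = b - 1 ∧ ∃ k, psum g k = -1), W p g
      = ∑ g ∈ (Pn n).filter (fun g => psum g n = -(b + 1)), W p g := by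
  have hex2 : ∀ g ∈ (Pn n).filter (fun g => psum g n = -(b + 1)),
      ∃ k, psum g k = -1 := by
    intro g hg
    rw [Finset.mem_filter] at hg
    obtain ⟨hg1, hg2⟩ := hg
    obtain ⟨j, _, hj⟩ := hit_neg_one hg1 n (by omega)
    exact ⟨j, hj⟩
  refine Finset.sum_nbij' R R ?_ ?_ ?_ ?_ ?_
  · intro g hg
    rw [Finset.mem_filter] at hg ⊢
    obtain ⟨hgP, hsum, hex⟩ := hg
    refine ⟨R_mem hgP, ?_⟩
    rw [psum_R_ge hex (tau_le_n hex), hsum]; ring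
  · intro g hg
    have hex := hex2 g hg
    rw [Finset.mem_filter] at hg ⊢
    obtain ⟨hgP, hsum⟩ := hg
    refine ⟨R_mem hgP, ?_, exists_R hex⟩
    rw [psum_R_ge hex (tau_le_n hex), hsum]; ring
  · intro g hg; rw [Finset.mem_filter] at hg; exact R_R hg.2.2
  · intro g hg; exact R_R (hex2 g hg)
  · intro g _; exact (W_R p g).symm

lemma sum_negate (p : ℝ) (n : ℕ) (c : ℤ) :
    ∑ g ∈ (Pn n).filter (fun g => psum g n = c), W p g
      = ∑ g ∈ (Pn n).filter (fun g => psum g n = -c), W p g := by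
  refine Finset.sum_nbij' (fun g i => -g i) (fun g i => -g i) ?_ ?_ ?_ ?_ ?_
  · intro g hg
    rw [Finset.mem_filter] at hg ⊢
    exact ⟨mem_Pn.2 fun i => neg_mem_V (mem_Pn.1 hg.1 i), by rw [psum_neg, hg.2]⟩
  · intro g hg
    rw [Finset.mem_filter] at hg ⊢
    exact ⟨mem_Pn.2 fun i => neg_mem_V (mem_Pn.1 hg.1 i), by rw [psum_neg, hg.2]; ring⟩
  · intro g _; funext i; simp
  · intro g _; funext i; simp
  · intro g _
    exact (Finset.prod_congr rfl fun i _ => q_neg p (g i)).symm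

lemma sum_split (p : ℝ) (n : ℕ) (c : ℤ) :
    ∑ g ∈ (Pn n).filter (fun g => psum g n = c ∧ ∀ k ≤ n, 0 ≤ psum g k), W p g
      = ∑ g ∈ (Pn n).filter (fun g => psum g n = c), W p g
        - ∑ g ∈ (Pn n).filter (fun g => psum g n = c ∧ ∃ k, psum g k = -1), W p g := by
  have hdisj : Disjoint
      ((Pn n).filter (fun g => psum g n = c ∧ ∀ k ≤ n, 0 ≤ psum g k))
      ((Pn n).filter (fun g => psum g n = c ∧ ∃ k, psum g k = -1)) := by
    rw [Finset.disjoint_left]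
    intro g hg1 hg2
    rw [Finset.mem_filter] at hg1 hg2
    obtain ⟨_, _, hpos⟩ := hg1
    obtain ⟨_, _, hex⟩ := hg2
    have h1 := hpos (tau g) (tau_le_n hex)
    have h2 := psum_tau hex
    omega
  have hun : ((Pn n).filter (fun g => psum g n = c ∧ ∀ k ≤ n, 0 ≤ psum g k))
      ∪ ((Pn n).filter (fun g => psum g n = c ∧ ∃ k, psum g k = -1))
      = (Pn n).filter (fun g => psum g n = c) := by
    ext g
    simp only [Finset.mem_union, Finset.mem_filter]
    constructor
    · rintro (⟨h1, h2, _⟩ | ⟨h1, h2, _⟩) <;> exact ⟨h1, h2⟩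
    · rintro ⟨h1, h2⟩
      by_cases hpos : ∀ k ≤ n, 0 ≤ psum g k
      · exact Or.inl ⟨h1, h2, hpos⟩
      · push_neg at hpos
        obtain ⟨k, hk, hk'⟩ := hpos
        obtain ⟨j, _, hj⟩ := hit_neg_one h1 k (by omega)
        exact Or.inr ⟨h1, h2, j, hj⟩
  have h := Finset.sum_union (f := W p) hdisj
  rw [hun] at h
  linarith

lemma extf_cons {n : ℕ} (x : ℤ) (g : Fin n → ℤ) (i : ℕ) :
    extf (Fin.cons x g) (i + 1) = extf g i := by
  unfold extf
  by_cases h : i < n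
  · rw [dif_pos (by omega : i + 1 < n + 1), dif_pos h]
    exact Fin.cons_succ (α := fun _ => ℤ) x g ⟨i, h⟩
  · rw [dif_neg (by omega), dif_neg h]

lemma extf_cons_zero {n : ℕ} (x : ℤ) (g : Fin n → ℤ) :
    extf (Fin.cons x g) 0 = x := by
  rw [extf_lt _ (Nat.succ_pos n)]
  exact Fin.cons_zero (α := fun _ => ℤ) x g

lemma psum_cons {n : ℕ} (x : ℤ) (g : Fin n → ℤ) (k : ℕ) :
    psum (Fin.cons x g) (k + 1) = x + psum g k := by
  unfold psum
  rw [Finset.sum_range_succ',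
    Finset.sum_congr rfl fun i (_ : i ∈ Finset.range k) => extf_cons x g i,
    extf_cons_zero]
  ring

lemma cons_mem {n : ℕ} {x : ℤ} {g : Fin n → ℤ} (hx : x ∈ V) (hg : g ∈ Pn n) :
    Fin.cons x g ∈ Pn (n + 1) := by
  rw [mem_Pn]
  intro i
  refine Fin.cases ?_ ?_ i
  · rw [Fin.cons_zero]; exact hx
  · intro j; rw [Fin.cons_succ]; exact mem_Pn.1 hg j

lemma tail_mem {n : ℕ} {f : Fin (n + 1) → ℤ} (hf : f ∈ Pn (n + 1)) :
    Fin.tail f ∈ Pn n :=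
  mem_Pn.2 fun i => mem_Pn.1 hf i.succ

lemma W_cons (p : ℝ) {n : ℕ} (x : ℤ) (g : Fin n → ℤ) :
    W p (Fin.cons x g) = q p x * W p g := by
  unfold W
  rw [Fin.prod_univ_succ]
  simp [Fin.cons_succ]

lemma one_mem_V : (1 : ℤ) ∈ V := mem_V.2 (Or.inr (Or.inr rfl))

lemma q_one (p : ℝ) : q p 1 = p := by simp [q]

lemma sum_cons (p : ℝ) (n : ℕ) (b : ℤ) :
    ∑ f ∈ (Pn (n+1)).filter
        (fun f => psum f (n+1) = b ∧ ∀ k, 0 < k → k ≤ n+1 → 0 < psum f k), W p f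
      = p * ∑ g ∈ (Pn n).filter
          (fun g => psum g n = b - 1 ∧ ∀ k ≤ n, 0 ≤ psum g k), W p g := by
  have key : ∀ f : Fin (n+1) → ℤ, f ∈ Pn (n+1) →
      (∀ k, 0 < k → k ≤ n+1 → 0 < psum f k) → f 0 = 1 := by
    intro f hf hpos
    have h1 : psum f 1 = f 0 := by
      have : psum f (0 + 1) = psum f 0 + extf f 0 := psum_succ f 0
      rw [psum_zero, extf_lt f (Nat.succ_pos n)] at this
      rw [this, Fin.mk_zero]; ring
    have h2 := hpos 1 one_pos (by omega)
    rw [h1] at h2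
    rcases mem_V.1 (mem_Pn.1 hf 0) with h | h | h <;> omega
  have hfc : ∀ f : Fin (n+1) → ℤ, f ∈ (Pn (n+1)).filter
      (fun f => psum f (n+1) = b ∧ ∀ k, 0 < k → k ≤ n+1 → 0 < psum f k) →
      Fin.cons 1 (Fin.tail f) = f := by
    intro f hf
    rw [Finset.mem_filter] at hf
    rw [← key f hf.1 hf.2.2]
    exact Fin.cons_self_tail f
  rw [Finset.mul_sum]
  refine Finset.sum_nbij' Fin.tail (fun g => Fin.cons (α := fun _ => ℤ) 1 g) ?_ ?_ ?_ ?_ ?_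
  · intro f hf
    have hc := hfc f hf
    rw [Finset.mem_filter] at hf ⊢
    obtain ⟨hfP, hsum, hpos⟩ := hf
    refine ⟨tail_mem hfP, ?_, ?_⟩
    · have := psum_cons 1 (Fin.tail f) n
      rw [hc] at this
      omega
    · intro k hk
      have := psum_cons 1 (Fin.tail f) k
      rw [hc] at this
      have h2 := hpos (k + 1) (Nat.succ_pos k) (by omega)
      omega
  · intro g hg
    rw [Finset.mem_filter] at hg ⊢
    obtain ⟨hgP, hsum, hpos⟩ := hg
    refine ⟨cons_mem one_mem_V hgP, ?_, ?_⟩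
    · rw [psum_cons]; omega
    · intro k hk hk'
      obtain ⟨j, rfl⟩ : ∃ j, k = j + 1 := ⟨k - 1, by omega⟩
      rw [psum_cons]
      have := hpos j (by omega)
      omega
  · exact hfc
  · intro g _; exact Fin.tail_cons (α := fun _ : Fin (n+1) => ℤ) (x := 1) (p := g)
  · intro f hf
    have hc := hfc f hf
    conv_lhs => rw [← hc]
    rw [W_cons, q_one]


open MeasureTheory ProbabilityTheory

lemma measure_eq {Ω : Type*} [MeasurableSpace Ω] (μ : Measure Ω) [IsProbabilityMeasure μ]
    {p : ℝ} (hp : p ∈ Set.Ioo (0 : ℝ) (1 / 2))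
    (ξ : ℕ → Ω → ℤ) (hmeas : ∀ i, Measurable (ξ i))
    (hindep : iIndepFun ξ μ)
    (hup : ∀ i, μ {ω | ξ i ω = 1} = ENNReal.ofReal p)
    (hdown : ∀ i, μ {ω | ξ i ω = -1} = ENNReal.ofReal p)
    (hlazy : ∀ i, μ {ω | ξ i ω = 0} = ENNReal.ofReal (1 - 2 * p))
    (N : ℕ) (C : (Fin N → ℤ) → Prop) [DecidablePred C] (E : Set Ω)
    (hdet : ∀ ω, (∀ i : Fin N, ξ (i : ℕ) ω ∈ V) →
      (ω ∈ E ↔ C (fun i : Fin N => ξ (i : ℕ) ω))) :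
    μ E = ENNReal.ofReal (∑ f ∈ (Pn N).filter C, W p f) := by
  obtain ⟨hp1, hp2⟩ := hp
  -- measure of a single step value
  have hval : ∀ (i : ℕ) (v : ℤ), v ∈ V → μ (ξ i ⁻¹' {v}) = ENNReal.ofReal (q p v) := by
    intro i v hv
    have : ξ i ⁻¹' {v} = {ω | ξ i ω = v} := rfl
    rw [this]
    rcases mem_V.1 hv with h | h | h <;> subst h
    · rw [hdown i]; simp [q]
    · rw [hlazy i]; simp [q]
    · rw [hup i]; simp [q]
  -- each step a.s. takes values in V
  have hnull : ∀ i : ℕ, μ {ω | ξ i ω ∉ V} = 0 := by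
    intro i
    set A1 : Set Ω := {ω | ξ i ω = -1} with hA1
    set A2 : Set Ω := {ω | ξ i ω = 0} with hA2
    set A3 : Set Ω := {ω | ξ i ω = 1} with hA3
    have hm1 : MeasurableSet A1 := hmeas i (measurableSet_singleton (-1))
    have hm2 : MeasurableSet A2 := hmeas i (measurableSet_singleton 0)
    have hm3 : MeasurableSet A3 := hmeas i (measurableSet_singleton 1)
    have hd12 : Disjoint A1 (A2 ∪ A3) := by
      rw [Set.disjoint_left]
      rintro ω h1 (h2 | h3) <;> simp only [hA1, hA2, hA3, Set.mem_setOf_eq] at * <;> omega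
    have hd23 : Disjoint A2 A3 := by
      rw [Set.disjoint_left]
      intro ω h2 h3
      simp only [hA2, hA3, Set.mem_setOf_eq] at h2 h3
      omega
    have hU : μ (A1 ∪ (A2 ∪ A3)) = 1 := by
      rw [measure_union hd12 (hm2.union hm3), measure_union hd23 hm3,
        hdown i, hlazy i, hup i, ← ENNReal.ofReal_add (by linarith) (by linarith),
        ← ENNReal.ofReal_add (by linarith) (by linarith),
        show p + (1 - 2 * p + p) = 1 by ring, ENNReal.ofReal_one]
    have hcompl : {ω | ξ i ω ∉ V} = (A1 ∪ (A2 ∪ A3))ᶜ := by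
      ext ω
      simp only [Set.mem_setOf_eq, Set.mem_compl_iff, Set.mem_union, hA1, hA2, hA3,
        Set.mem_setOf_eq, mem_V]
    rw [hcompl, measure_compl (hm1.union (hm2.union hm3)) (measure_ne_top μ _),
      hU, measure_univ, tsub_self]
  -- the cylinder sets
  set A : (Fin N → ℤ) → Set Ω := fun f => ⋂ i ∈ Finset.range N, ξ i ⁻¹' {extf f i} with hA
  have hAmeas : ∀ f, MeasurableSet (A f) := by
    intro f
    exact MeasurableSet.biInter (Finset.range N).countable_toSet
      fun i _ => hmeas i (measurableSet_singleton _)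
  have hmemA : ∀ f ω, ω ∈ A f ↔ ∀ i < N, ξ i ω = extf f i := by
    intro f ω
    simp only [hA, Set.mem_iInter, Set.mem_preimage, Set.mem_singleton_iff,
      Finset.mem_range]
  have hAval : ∀ f ∈ Pn N, ∀ ω ∈ A f, ∀ i : Fin N, ξ (i : ℕ) ω = f i := by
    intro f hf ω hω i
    rw [(hmemA f ω).1 hω (i : ℕ) i.isLt, extf_lt f i.isLt, Fin.eta]
  have hAμ : ∀ f ∈ Pn N, μ (A f) = ENNReal.ofReal (W p f) := by
    intro f hf
    rw [hA]
    rw [hindep.measure_inter_preimage_eq_mul (Finset.range N)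
      (sets := fun i => {extf f i}) (fun i _ => measurableSet_singleton _)]
    have : ∀ i ∈ Finset.range N, μ (ξ i ⁻¹' {extf f i}) = ENNReal.ofReal (q p (extf f i)) := by
      intro i hi
      rw [Finset.mem_range] at hi
      refine hval i _ ?_
      rw [extf_lt f hi]
      exact mem_Pn.1 hf _
    rw [Finset.prod_congr rfl this,
      ← ENNReal.ofReal_prod_of_nonneg (fun i _ => q_nonneg ⟨hp1, hp2⟩ _)]
    congr 1
    rw [Finset.prod_range (fun i => q p (extf f i))]
    exact Finset.prod_congr rfl fun i _ => by rw [extf_lt f i.isLt, Fin.eta]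
  -- the good set
  set G : Set Ω := {ω | ∀ i : Fin N, ξ (i : ℕ) ω ∈ V} with hG
  have hGc : μ Gᶜ = 0 := by
    have hsub : Gᶜ ⊆ ⋃ i : Fin N, {ω | ξ (i : ℕ) ω ∉ V} := by
      intro ω hω
      simp only [hG, Set.mem_compl_iff, Set.mem_setOf_eq, not_forall] at hω
      obtain ⟨i, hi⟩ := hω
      exact Set.mem_iUnion.2 ⟨i, hi⟩
    exact measure_mono_null hsub (measure_iUnion_null fun i => hnull (i : ℕ))
  set U : Set Ω := ⋃ f ∈ (Pn N).filter C, A f with hU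
  have hUE : U ⊆ E := by
    intro ω hω
    simp only [hU, Set.mem_iUnion] at hω
    obtain ⟨f, hf, hωf⟩ := hω
    rw [Finset.mem_filter] at hf
    have hfv := hAval f hf.1 ω hωf
    have hωG : ∀ i : Fin N, ξ (i : ℕ) ω ∈ V := fun i => by
      rw [hfv i]; exact mem_Pn.1 hf.1 i
    rw [hdet ω hωG]
    have : (fun i : Fin N => ξ (i : ℕ) ω) = f := funext fun i => hfv i
    rw [this]
    exact hf.2
  have hEU : E \ U ⊆ Gᶜ := by
    intro ω hω
    obtain ⟨hωE, hωU⟩ := hω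
    by_contra hωG
    rw [Set.notMem_compl_iff] at hωG
    have hωG' : ∀ i : Fin N, ξ (i : ℕ) ω ∈ V := hωG
    set f : Fin N → ℤ := fun i => ξ (i : ℕ) ω with hf
    have hfP : f ∈ Pn N := mem_Pn.2 fun i => hωG' i
    have hωA : ω ∈ A f := by
      rw [hmemA]
      intro i hi
      rw [extf_lt f hi]
    have hCf : C f := (hdet ω hωG').1 hωE
    exact hωU (Set.mem_iUnion.2 ⟨f, Set.mem_iUnion.2 ⟨Finset.mem_filter.2 ⟨hfP, hCf⟩, hωA⟩⟩)
  have hμEU : μ E = μ U := by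
    refine le_antisymm ?_ (measure_mono hUE)
    calc μ E ≤ μ (U ∪ (E \ U)) := measure_mono fun ω hω => by
              by_cases h : ω ∈ U
              · exact Or.inl h
              · exact Or.inr ⟨hω, h⟩
      _ ≤ μ U + μ (E \ U) := measure_union_le _ _
      _ ≤ μ U + μ Gᶜ := add_le_add le_rfl (measure_mono hEU)
      _ = μ U := by rw [hGc, add_zero]
  have hdisjA : Set.PairwiseDisjoint (↑((Pn N).filter C)) A := by
    intro f hf g hg hfg
    rw [Function.onFun, Set.disjoint_left]
    intro ω hωf hωg
    refine hfg (funext fun i => ?_)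
    rw [Finset.mem_coe, Finset.mem_filter] at hf hg
    rw [← hAval f hf.1 ω hωf i, ← hAval g hg.1 ω hωg i]
  rw [hμEU, hU, measure_biUnion_finset hdisjA fun f _ => hAmeas f]
  rw [Finset.sum_congr rfl fun f hf => hAμ f (Finset.mem_filter.1 hf).1]
  rw [← ENNReal.ofReal_sum_of_nonneg fun f _ => W_nonneg ⟨hp1, hp2⟩ f]

end ReflAux

open MeasureTheory ProbabilityTheory Finset


/-- Reflection-principle identity: for the lazy symmetric random walk with
`P(ξ = ±1) = p`, `P(ξ = 0) = 1 - 2p`, first entrance time `T` of `(-∞,0]`,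
every `m ≥ 1` and integer `b ≥ 1`:
`P(S_m = b, T > m) = p [P(S_{m-1} = b-1) - P(S_{m-1} = b+1)]`.
The event `{T > m}` is written explicitly as `{S_1 > 0, …, S_m > 0}`. -/
theorem reflection_identity (Ω : Type*) [MeasurableSpace Ω]
(μ : Measure Ω) [IsProbabilityMeasure μ]
    (p : ℝ) (hp : p ∈ Set.Ioo (0 : ℝ) (1 / 2))
    (ξ : ℕ → Ω → ℤ) (hmeas : ∀ i, Measurable (ξ i))
    (hindep : iIndepFun ξ μ)
    (hup : ∀ i, μ {ω | ξ i ω = 1} = ENNReal.ofReal p)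
    (hdown : ∀ i, μ {ω | ξ i ω = -1} = ENNReal.ofReal p)
    (hlazy : ∀ i, μ {ω | ξ i ω = 0} = ENNReal.ofReal (1 - 2 * p))
    (S : ℕ → Ω → ℤ) (hS : ∀ n ω, S n ω = ∑ i ∈ Finset.range n, ξ i ω)
    (m : ℕ) (hm : 1 ≤ m) (b : ℤ) (hb : 1 ≤ b) :
    (μ {ω | S m ω = b ∧ ∀ k, 0 < k → k ≤ m → 0 < S k ω}).toReal =
      p * ((μ {ω | S (m - 1) ω = b - 1}).toReal -
        (μ {ω | S (m - 1) ω = b + 1}).toReal) := by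
  obtain ⟨n, rfl⟩ : ∃ n, m = n + 1 := ⟨m - 1, by omega⟩
  have hps : ∀ ω, ∀ N : ℕ, ∀ k ≤ N,
      S k ω = ReflAux.psum (fun i : Fin N => ξ (i : ℕ) ω) k := by
    intro ω N k hk
    rw [hS]
    refine Finset.sum_congr rfl fun i hi => ?_
    rw [Finset.mem_range] at hi
    rw [ReflAux.extf_lt _ (by omega : i < N)]
  have h1 : μ {ω | S (n+1) ω = b ∧ ∀ k, 0 < k → k ≤ n+1 → 0 < S k ω}
      = ENNReal.ofReal (∑ f ∈ (ReflAux.Pn (n+1)).filter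
          (fun f => ReflAux.psum f (n+1) = b ∧
            ∀ k, 0 < k → k ≤ n+1 → 0 < ReflAux.psum f k), ReflAux.W p f) := by
    refine ReflAux.measure_eq μ hp ξ hmeas hindep hup hdown hlazy (n+1) _ _ ?_
    intro ω hω
    simp only [Set.mem_setOf_eq]
    constructor
    · rintro ⟨hb', hpos⟩
      exact ⟨by rw [← hps ω (n+1) (n+1) le_rfl]; exact hb',
        fun k hk hk' => by rw [← hps ω (n+1) k hk']; exact hpos k hk hk'⟩
    · rintro ⟨hb', hpos⟩
      exact ⟨by rw [hps ω (n+1) (n+1) le_rfl]; exact hb',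
        fun k hk hk' => by rw [hps ω (n+1) k hk']; exact hpos k hk hk'⟩
  have h2 : ∀ c : ℤ, μ {ω | S n ω = c}
      = ENNReal.ofReal (∑ f ∈ (ReflAux.Pn n).filter
          (fun f => ReflAux.psum f n = c), ReflAux.W p f) := by
    intro c
    refine ReflAux.measure_eq μ hp ξ hmeas hindep hup hdown hlazy n _ _ ?_
    intro ω hω
    simp only [Set.mem_setOf_eq]
    rw [hps ω n n le_rfl]
  have hsub : n + 1 - 1 = n := rfl
  rw [hsub, h1, h2 (b - 1), h2 (b + 1)]
  rw [ENNReal.toReal_ofReal (Finset.sum_nonneg fun f _ => ReflAux.W_nonneg hp f),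
    ENNReal.toReal_ofReal (Finset.sum_nonneg fun f _ => ReflAux.W_nonneg hp f),
    ENNReal.toReal_ofReal (Finset.sum_nonneg fun f _ => ReflAux.W_nonneg hp f)]
  rw [ReflAux.sum_cons p n b, ReflAux.sum_split p n (b - 1),
    ReflAux.sum_reflect p n hb, ← ReflAux.sum_negate p n (b + 1)]
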